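/- Under Monotonicity, IMCO, and absorbing treatment, complier covariate means are constant across waves: if P(T_1(1) > T_1(0)) > 0, then for every wave w ∈ {1,...,w̄} the events {T_w(1) > T_w(0)} and {T_1(1) > T_1(0)} agree up to a P-null set, and hence E[X | T_w(1) > T_w(0)] = E[X | T_1(1) > T_1(0)] for any integrable X : Ω → ℝ. -/
import Mathlib


open MeasureTheory ProbabilityTheory Finset

/-- Conditional mean `E[X | A]`: the expectation of `X` under `P` conditioned on the event `A`. -/
noncomputable def cmean {Ω : Type*} [MeasurableSpace Ω] (P : MeasureTheory.Measure Ω)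
    (A : Set Ω) (X : Ω → ℝ) : ℝ :=
  ∫ ω, X ω ∂(P[|A])

theorem complier_means_constant_across_waves
    {Ω : Type*} [MeasurableSpace Ω] (P : MeasureTheory.Measure Ω) [IsProbabilityMeasure P]
    (wbar : ℕ) (hwbar : 1 ≤ wbar)
    (T : ℕ → ℕ → Ω → ℕ) (hTmeas : ∀ w z, Measurable (T w z))
    (hTrange : ∀ w ∈ Set.Icc 1 wbar, ∀ z ≤ 1, ∀ ω, T w z ω ≤ w)
    (hAbs : ∀ z ≤ 1, ∀ w, 1 ≤ w → w < wbar → ∀ ω,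
      (1 ≤ T w z ω → T (w + 1) z ω = T w z ω + 1) ∧
      (T w z ω = 0 → T (w + 1) z ω ≤ 1))
    (hMono : ∀ w ∈ Set.Icc 1 wbar, ∀ᵐ ω ∂P, T w 0 ω ≤ T w 1 ω)
    (hIMCO : ∀ w ∈ Set.Icc 1 wbar, ∀ᵐ ω ∂P, T w 0 ω < T w 1 ω → T w 1 ω = w)
    (hC : 0 < P {ω | T 1 0 ω < T 1 1 ω}) :
    ∀ w ∈ Set.Icc 1 wbar,
      P (symmDiff {ω | T w 0 ω < T w 1 ω} {ω | T 1 0 ω < T 1 1 ω}) = 0 ∧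
      ∀ X : Ω → ℝ, MeasureTheory.Integrable X P →
        cmean P {ω | T w 0 ω < T w 1 ω} X = cmean P {ω | T 1 0 ω < T 1 1 ω} X := by
  -- L1: if treated at wave 1, treated ever since with T k = k
  have L1 : ∀ z ≤ 1, ∀ ω, T 1 z ω = 1 → ∀ k, 1 ≤ k → k ≤ wbar → T k z ω = k := by
    intro z hz ω h1 k hk1 hkw
    induction k, hk1 using Nat.le_induction with
    | base => exact h1
    | succ n hn ih =>
      have hnw : n < wbar := Nat.lt_of_succ_le hkw
      have ihn := ih (le_of_lt hnw)
      have := (hAbs z hz n hn hnw ω).1 (by omega)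
      omega
  -- L2: if untreated at wave 1, T k < k for all k in range
  have L2 : ∀ z ≤ 1, ∀ ω, T 1 z ω = 0 → ∀ k, 1 ≤ k → k ≤ wbar → T k z ω < k := by
    intro z hz ω h0 k hk1 hkw
    induction k, hk1 using Nat.le_induction with
    | base => omega
    | succ n hn ih =>
      have hnw : n < wbar := Nat.lt_of_succ_le hkw
      have ihn := ih (le_of_lt hnw)
      rcases Nat.eq_zero_or_pos (T n z ω) with h | h
      · have := (hAbs z hz n hn hnw ω).2 h
        omega
      · have := (hAbs z hz n hn hnw ω).1 h
        omega
  intro w hw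
  obtain ⟨hw1, hww⟩ := hw
  -- pointwise equivalence under IMCO at w
  have key : ∀ ω, (T w 0 ω < T w 1 ω → T w 1 ω = w) →
      (T w 0 ω < T w 1 ω ↔ T 1 0 ω < T 1 1 ω) := by
    intro ω himco
    have hr0 : T 1 0 ω ≤ 1 := hTrange 1 ⟨le_refl 1, hwbar⟩ 0 (by omega) ω
    have hr1 : T 1 1 ω ≤ 1 := hTrange 1 ⟨le_refl 1, hwbar⟩ 1 le_rfl ω
    constructor
    · intro h
      have hw1eq : T w 1 ω = w := himco h
      have h11 : T 1 1 ω = 1 := by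
        by_contra hne
        have h0 : T 1 1 ω = 0 := by omega
        have := L2 1 le_rfl ω h0 w hw1 hww
        omega
      have h10 : T 1 0 ω = 0 := by
        by_contra hne
        have h1 : T 1 0 ω = 1 := by omega
        have := L1 0 (by omega) ω h1 w hw1 hww
        omega
      omega
    · intro h
      have h10 : T 1 0 ω = 0 := by omega
      have h11 : T 1 1 ω = 1 := by omega
      have e1 := L1 1 le_rfl ω h11 w hw1 hww
      have e0 := L2 0 (by omega) ω h10 w hw1 hww
      omega
  have hnull : P {ω | ¬ (T w 0 ω < T w 1 ω → T w 1 ω = w)} = 0 := by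
    have := hIMCO w ⟨hw1, hww⟩
    rwa [MeasureTheory.ae_iff] at this
  have hsub : symmDiff {ω | T w 0 ω < T w 1 ω} {ω | T 1 0 ω < T 1 1 ω} ⊆
      {ω | ¬ (T w 0 ω < T w 1 ω → T w 1 ω = w)} := by
    intro ω hω
    rw [Set.mem_symmDiff] at hω
    intro himco
    have := key ω himco
    simp only [Set.mem_setOf_eq] at hω
    tauto
  have hsd : P (symmDiff {ω | T w 0 ω < T w 1 ω} {ω | T 1 0 ω < T 1 1 ω}) = 0 :=
    measure_mono_null hsub hnull
  refine ⟨hsd, ?_⟩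
  have hae : {ω | T w 0 ω < T w 1 ω} =ᵐ[P] {ω | T 1 0 ω < T 1 1 ω} :=
    (MeasureTheory.measure_symmDiff_eq_zero_iff).mp hsd
  have hcond : P[|{ω | T w 0 ω < T w 1 ω}] = P[|{ω | T 1 0 ω < T 1 1 ω}] := by
    unfold ProbabilityTheory.cond
    rw [measure_congr hae, Measure.restrict_congr_set hae]
  intro X _
  unfold cmean
  rw [hcond]
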